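/- For every real σ with 0 < σ < 1, ζ(σ) ≠ 0; that is, the Riemann zeta function has no zeros on the real segment (0,1), and hence Riemann's ξ function ξ(s) = (1/2)s(s−1)π^{−s/2}Γ(s/2)ζ(s) does not vanish at any real point of the critical strip. -/

import Mathlib

open Complex Filter Topology Set

noncomputable def etaF (s : ℂ) : ℂ :=
  ∑' k : ℕ, (((2 * k + 1 : ℕ) : ℂ) ^ (-s) - ((2 * k + 2 : ℕ) : ℂ) ^ (-s))

lemma eta_term_bound {s : ℂ} {δ R : ℝ} (hδ : 0 < δ) (hδs : δ ≤ s.re) (hR : ‖s‖ ≤ R) (k : ℕ) :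
    ‖((2 * k + 1 : ℕ) : ℂ) ^ (-s) - ((2 * k + 2 : ℕ) : ℂ) ^ (-s)‖
      ≤ R * (2 * (k : ℝ) + 1) ^ (-δ - 1) := by
  set a : ℝ := 2 * (k : ℝ) + 1 with ha_def
  set b : ℝ := 2 * (k : ℝ) + 2 with hb_def
  have ha1 : (1 : ℝ) ≤ a := by simp only [ha_def]; linarith [Nat.cast_nonneg (α := ℝ) k]
  have hab : a ≤ b := by simp only [ha_def, hb_def]; linarith
  set f : ℝ → ℂ := fun x ↦ ((x : ℂ)) ^ (-s) with hf_def
  set f' : ℝ → ℂ := fun x ↦ (-s) * ((x : ℂ)) ^ (-s - 1) with hf'_def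
  have hC : ∀ x ∈ Icc a b, ‖f' x‖ ≤ R * a ^ (-δ - 1) := by
    intro x hx
    have hxa : a ≤ x := hx.1
    have hx0 : (0 : ℝ) < x := by linarith
    have h1 : ‖f' x‖ = ‖s‖ * x ^ (-s.re - 1) := by
      rw [hf'_def]
      simp only [norm_mul, norm_neg]
      rw [Complex.norm_cpow_eq_rpow_re_of_pos hx0]
      simp [Complex.sub_re]
    rw [h1]
    have h2 : x ^ (-s.re - 1) ≤ a ^ (-s.re - 1) :=
      Real.rpow_le_rpow_of_nonpos (by linarith) hxa (by linarith [hδs])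
    have h3 : a ^ (-s.re - 1) ≤ a ^ (-δ - 1) :=
      Real.rpow_le_rpow_of_exponent_le ha1 (by linarith)
    exact mul_le_mul hR (h2.trans h3) (Real.rpow_nonneg (by linarith) _)
      ((norm_nonneg s).trans hR)
  have hderiv : ∀ x ∈ Icc a b, HasDerivWithinAt f (f' x) (Icc a b) x := by
    intro x hx
    have hx0 : (0 : ℝ) < x := by linarith [hx.1]
    have h0 : ((x : ℝ) : ℂ) ∈ Complex.slitPlane := by
      rw [Complex.mem_slitPlane_iff]
      left; simpa using hx0
    have := (((hasDerivAt_id ((x : ℝ) : ℂ)).cpow_const (c := -s) h0).comp_ofReal).hasDerivWithinAt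
      (s := Icc a b)
    simpa [hf_def, hf'_def, mul_one] using this
  have key := Convex.norm_image_sub_le_of_norm_hasDerivWithin_le hderiv hC (convex_Icc a b)
    (left_mem_Icc.mpr hab) (right_mem_Icc.mpr hab)
  have hba : ‖b - a‖ = 1 := by
    simp [ha_def, hb_def]
    norm_num
  rw [hba, mul_one] at key
  have hfa : f a = ((2 * k + 1 : ℕ) : ℂ) ^ (-s) := by
    simp only [hf_def, ha_def]; norm_cast
  have hfb : f b = ((2 * k + 2 : ℕ) : ℂ) ^ (-s) := by
    simp only [hf_def, hb_def]; norm_cast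
  calc ‖((2 * k + 1 : ℕ) : ℂ) ^ (-s) - ((2 * k + 2 : ℕ) : ℂ) ^ (-s)‖
      = ‖f b - f a‖ := by rw [hfa, hfb, norm_sub_rev]
    _ ≤ R * a ^ (-δ - 1) := key

lemma u_summable {δ : ℝ} (hδ : 0 < δ) :
    Summable (fun k : ℕ ↦ (2 * (k : ℝ) + 1) ^ (-δ - 1)) := by
  have h1 : Summable (fun k : ℕ ↦ ((k : ℝ) + 1) ^ (-δ - 1)) := by
    have := (Real.summable_one_div_nat_rpow (p := δ + 1)).mpr (by linarith)
    have h2 := (summable_nat_add_iff 1).mpr this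
    refine h2.congr fun k ↦ ?_
    rw [one_div, ← Real.rpow_neg (by positivity)]
    push_cast
    ring_nf
  refine h1.of_nonneg_of_le (fun k ↦ Real.rpow_nonneg (by positivity) _) fun k ↦ ?_
  exact Real.rpow_le_rpow_of_nonpos (by positivity) (by linarith) (by linarith)

lemma etaF_differentiableAt {s₀ : ℂ} (hs₀ : 0 < s₀.re) : DifferentiableAt ℂ etaF s₀ := by
  set δ : ℝ := s₀.re / 2 with hδ_def
  have hδ : 0 < δ := by positivity
  set R : ℝ := ‖s₀‖ + δ with hR_def
  set U : Set ℂ := {s : ℂ | δ < s.re} ∩ Metric.ball s₀ δ with hU_def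
  have hUopen : IsOpen U := ((isOpen_lt continuous_const Complex.continuous_re).inter
    Metric.isOpen_ball)
  have hs₀U : s₀ ∈ U := by
    constructor
    · simp only [Set.mem_setOf_eq]; linarith
    · exact Metric.mem_ball_self hδ
  have hdiff : DifferentiableOn ℂ etaF U := by
    apply differentiableOn_tsum_of_summable_norm
      (u := fun k : ℕ ↦ R * (2 * (k : ℝ) + 1) ^ (-δ - 1))
    · exact (u_summable hδ).mul_left R
    · intro k
      have h1 : ((2 * k + 1 : ℕ) : ℂ) ≠ 0 := by
        exact_mod_cast (by omega : (2 * k + 1 : ℕ) ≠ 0)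
      have h2 : ((2 * k + 2 : ℕ) : ℂ) ≠ 0 := by
        exact_mod_cast (by omega : (2 * k + 2 : ℕ) ≠ 0)
      exact (((differentiable_id.neg).const_cpow (Or.inl h1)).sub
        ((differentiable_id.neg).const_cpow (Or.inl h2))).differentiableOn
    · exact hUopen
    · intro k w hw
      refine eta_term_bound hδ (le_of_lt hw.1) ?_ k
      have := mem_ball_iff_norm.mp hw.2
      calc ‖w‖ = ‖s₀ + (w - s₀)‖ := by ring_nf
        _ ≤ ‖s₀‖ + ‖w - s₀‖ := norm_add_le _ _
        _ ≤ R := by rw [hR_def]; linarith [this]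
  exact (hdiff.differentiableAt (hUopen.mem_nhds hs₀U))

lemma etaF_eq {s : ℂ} (hs : 1 < s.re) :
    etaF s = (1 - 2 ^ (1 - s)) * riemannZeta s := by
  have hs0 : s ≠ 0 := by
    intro h; rw [h] at hs; norm_num at hs
  set f : ℕ → ℂ := fun n ↦ (n : ℂ) ^ (-s) with hf_def
  have hsum : Summable f := by
    have := Complex.summable_one_div_nat_cpow.mpr hs
    refine this.congr fun n ↦ ?_
    simp [hf_def, cpow_neg, one_div]
  have hinj2 : Function.Injective (fun k : ℕ ↦ 2 * k) := fun a b h ↦ by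
    simp only at h; omega
  have hinj21 : Function.Injective (fun k : ℕ ↦ 2 * k + 1) := fun a b h ↦ by
    simp only at h; omega
  have hinj22 : Function.Injective (fun k : ℕ ↦ 2 * k + 2) := fun a b h ↦ by
    simp only at h; omega
  have heven : Summable (fun k : ℕ ↦ f (2 * k)) := hsum.comp_injective hinj2
  have hodd : Summable (fun k : ℕ ↦ f (2 * k + 1)) := hsum.comp_injective hinj21
  have heven2 : Summable (fun k : ℕ ↦ f (2 * k + 2)) := hsum.comp_injective hinj22
  have hf0 : f 0 = 0 := by
    rw [hf_def]; simp [Complex.zero_cpow (neg_ne_zero.mpr hs0)]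
  have hzeta : riemannZeta s = ∑' n : ℕ, f n := by
    rw [zeta_eq_tsum_one_div_nat_cpow hs]
    refine tsum_congr fun n ↦ ?_
    simp [hf_def, cpow_neg, one_div]
  have hshift : ∑' k : ℕ, f (2 * k) = ∑' k : ℕ, f (2 * k + 2) := by
    rw [Summable.tsum_eq_zero_add heven]
    have h00 : f (2 * 0) = 0 := by simpa using hf0
    rw [h00, zero_add]
    exact tsum_congr fun k ↦ by rw [show 2 * (k + 1) = 2 * k + 2 by ring]
  have hdouble : ∀ n : ℕ, (2 : ℂ) ^ (-s) * f n = f (2 * n) := by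
    intro n
    rw [hf_def]
    simp only
    have : ((2 * n : ℕ) : ℂ) = ((2 : ℝ) : ℂ) * ((n : ℝ) : ℂ) := by push_cast; ring
    rw [this, mul_cpow_ofReal_nonneg (by norm_num) (Nat.cast_nonneg n)]
    norm_num
  have h2s : (2 : ℂ) ^ (1 - s) * riemannZeta s = 2 * ∑' k : ℕ, f (2 * k + 2) := by
    have he : (2 : ℂ) ^ (1 - s) = 2 * 2 ^ (-s) := by
      rw [show (1 : ℂ) - s = 1 + (-s) by ring, cpow_add _ _ (by norm_num : (2:ℂ) ≠ 0), cpow_one]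
    rw [he, hzeta, mul_assoc, ← tsum_mul_left]
    congr 1
    rw [← hshift]
    exact tsum_congr hdouble
  have hsplit : riemannZeta s = (∑' k : ℕ, f (2 * k)) + ∑' k : ℕ, f (2 * k + 1) := by
    rw [hzeta, tsum_even_add_odd heven hodd]
  have hetaF : etaF s = (∑' k : ℕ, f (2 * k + 1)) - ∑' k : ℕ, f (2 * k + 2) := by
    rw [etaF]
    exact Summable.tsum_sub hodd heven2
  rw [sub_mul, one_mul, hetaF, h2s, hsplit, hshift]
  ring

lemma etaF_pos {σ : ℝ} (h0 : 0 < σ) : ∃ r : ℝ, 0 < r ∧ etaF (σ : ℂ) = (r : ℂ) := by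
  set g : ℕ → ℝ := fun k ↦ (2 * (k : ℝ) + 1) ^ (-σ) - (2 * (k : ℝ) + 2) ^ (-σ) with hg_def
  have hcast : ∀ k : ℕ, ((g k : ℝ) : ℂ)
      = ((2 * k + 1 : ℕ) : ℂ) ^ (-(σ : ℂ)) - ((2 * k + 2 : ℕ) : ℂ) ^ (-(σ : ℂ)) := by
    intro k
    rw [hg_def]
    push_cast [Complex.ofReal_cpow (by positivity : (0:ℝ) ≤ 2 * (k:ℝ) + 1),
      Complex.ofReal_cpow (by positivity : (0:ℝ) ≤ 2 * (k:ℝ) + 2)]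
    norm_num
  have hbound : ∀ k : ℕ, ‖((2 * k + 1 : ℕ) : ℂ) ^ (-(σ : ℂ)) - ((2 * k + 2 : ℕ) : ℂ) ^ (-(σ : ℂ))‖
      ≤ σ * (2 * (k : ℝ) + 1) ^ (-σ - 1) := by
    intro k
    refine eta_term_bound h0 (by simp) (by simp [abs_of_pos h0]) k
  have hsummableC : Summable (fun k : ℕ ↦ ((g k : ℝ) : ℂ)) := by
    refine Summable.of_norm_bounded ((u_summable h0).mul_left σ) fun k ↦ ?_
    rw [hcast k]; exact hbound k
  have hsummable : Summable g := Complex.summable_ofReal.mp hsummableC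
  have hgpos : ∀ k : ℕ, 0 < g k := by
    intro k
    rw [hg_def]
    simp only [sub_pos]
    exact Real.rpow_lt_rpow_of_neg (by positivity) (by linarith) (by linarith)
  have htsumpos : 0 < ∑' k, g k := Summable.tsum_pos hsummable (fun k ↦ (hgpos k).le) 0 (hgpos 0)
  refine ⟨∑' k, g k, htsumpos, ?_⟩
  rw [etaF, Complex.ofReal_tsum]
  exact tsum_congr fun k ↦ (hcast k).symm

noncomputable def zeta1 : ℂ → ℂ := Function.update (fun s ↦ (s - 1) * riemannZeta s) 1 1

lemma zeta1_eq {s : ℂ} (hs : s ≠ 1) : zeta1 s = (s - 1) * riemannZeta s := by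
  rw [zeta1, Function.update_of_ne hs]

lemma zeta1_differentiable : Differentiable ℂ zeta1 := by
  intro s
  rcases ne_or_eq s 1 with hs | rfl
  · have h1 : zeta1 =ᶠ[𝓝 s] fun t ↦ (t - 1) * riemannZeta t :=
      Filter.eventuallyEq_of_mem (isOpen_ne.mem_nhds hs) fun t ht ↦ zeta1_eq ht
    exact ((differentiableAt_id.sub (differentiableAt_const 1)).mul
      (differentiableAt_riemannZeta hs)).congr_of_eventuallyEq h1
  · refine (Complex.analyticAt_of_differentiable_on_punctured_nhds_of_continuousAt ?_
      ?_).differentiableAt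
    · filter_upwards [self_mem_nhdsWithin] with t ht
      have h1 : zeta1 =ᶠ[𝓝 t] fun u ↦ (u - 1) * riemannZeta u :=
        Filter.eventuallyEq_of_mem (isOpen_ne.mem_nhds ht) fun u hu ↦ zeta1_eq hu
      exact ((differentiableAt_id.sub (differentiableAt_const 1)).mul
        (differentiableAt_riemannZeta ht)).congr_of_eventuallyEq h1
    · rw [zeta1]
      simpa only [continuousAt_update_same] using riemannZeta_residue_one

lemma etaF_eq_zeta {σ : ℝ} (h0 : 0 < σ) (h1 : σ < 1) :
    etaF (σ : ℂ) = (1 - 2 ^ (1 - (σ : ℂ))) * riemannZeta (σ : ℂ) := by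
  set Ω : Set ℂ := {s : ℂ | 0 < s.re} with hΩ_def
  set F₁ : ℂ → ℂ := fun s ↦ (s - 1) * etaF s with hF₁
  set F₂ : ℂ → ℂ := fun s ↦ (1 - 2 ^ (1 - s)) * zeta1 s with hF₂
  have hΩopen : IsOpen Ω := isOpen_lt continuous_const Complex.continuous_re
  have hA₁ : AnalyticOnNhd ℂ F₁ Ω := by
    refine DifferentiableOn.analyticOnNhd ?_ hΩopen
    intro s hs
    exact (((differentiableAt_id.sub (differentiableAt_const 1)).mul
      (etaF_differentiableAt hs)).differentiableWithinAt)
  have hA₂ : AnalyticOnNhd ℂ F₂ Ω := by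
    refine DifferentiableOn.analyticOnNhd ?_ hΩopen
    intro s _
    refine (DifferentiableAt.mul ?_ (zeta1_differentiable s)).differentiableWithinAt
    exact (differentiableAt_const 1).sub
      (((differentiableAt_const 1).sub differentiableAt_id).const_cpow
        (Or.inl (by norm_num)))
  have hpre : IsPreconnected Ω := (convex_halfSpace_re_gt 0).isPreconnected
  have h2Ω : (2 : ℂ) ∈ Ω := by simp [hΩ_def]
  have hev : F₁ =ᶠ[𝓝 (2 : ℂ)] F₂ := by
    have hopen : IsOpen {s : ℂ | 1 < s.re} := isOpen_lt continuous_const Complex.continuous_re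
    have h2mem : (2 : ℂ) ∈ {s : ℂ | 1 < s.re} := by simp
    filter_upwards [hopen.mem_nhds h2mem] with s hs
    have hs1 : s ≠ 1 := by
      intro h; rw [h] at hs; norm_num at hs
    rw [hF₁, hF₂]
    simp only
    rw [etaF_eq hs, zeta1_eq hs1]
    ring
  have heq := hA₁.eqOn_of_preconnected_of_eventuallyEq hA₂ hpre h2Ω hev
  have hσΩ : (σ : ℂ) ∈ Ω := by simp [hΩ_def, h0]
  have hσ1 : (σ : ℂ) ≠ 1 := by
    intro h
    rw [Complex.ofReal_eq_one] at h
    linarith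
  have hne : (σ : ℂ) - 1 ≠ 0 := sub_ne_zero.mpr hσ1
  have h' : ((σ : ℂ) - 1) * etaF (σ : ℂ) = (1 - 2 ^ (1 - (σ : ℂ))) * zeta1 (σ : ℂ) := heq hσΩ
  have h2 : ((σ : ℂ) - 1) * etaF (σ : ℂ)
      = ((σ : ℂ) - 1) * ((1 - 2 ^ (1 - (σ : ℂ))) * riemannZeta (σ : ℂ)) := by
    rw [h', zeta1_eq hσ1]; ring
  exact mul_left_cancel₀ hne h2

theorem stmt_5 (σ : ℝ) (h0 : 0 < σ) (h1 : σ < 1) : riemannZeta (σ : ℂ) ≠ 0 := by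
  intro hz
  obtain ⟨r, hr, hre⟩ := etaF_pos h0
  have := etaF_eq_zeta h0 h1
  rw [hz, mul_zero, hre] at this
  exact hr.ne' (by exact_mod_cast this)
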